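/- Let Φ be a finite reduced crystallographic root system, α ∈ Φ, and set Z_s(α) = {β ∈ Φ : ⟨β, α∨⟩ = 0 and α + β ∉ Φ}. If β, γ ∈ Z_s(α) and β + γ ∈ Φ, then β + γ ∈ Z_s(α); that is, Z_s(α) is a closed subsystem of Φ. -/

import Mathlib

open Set Function

namespace ZsAux

variable {ι M N : Type*}
    [AddCommGroup M] [Module ℝ M] [AddCommGroup N] [Module ℝ N]

section fintype

variable [Fintype ι] (P : RootPairing ι ℝ M N) [P.IsRootSystem]

lemma neg_mem {x : M} (hx : x ∈ range P.root) : -x ∈ range P.root := by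
  obtain ⟨n, rfl⟩ := hx
  exact ⟨P.reflectionPerm n n, by
    rw [P.root_reflectionPerm, P.reflection_apply_self]⟩

instance : NoZeroSMulDivisors ℤ M :=
  ⟨fun {n x} h => by
    have h' : (n : ℝ) • x = 0 := by rw [Int.cast_smul_eq_zsmul]; exact h
    rcases smul_eq_zero.mp h' with h'' | h''
    · exact Or.inl (by exact_mod_cast h'')
    · exact Or.inr h''⟩

/-- Cauchy–Schwarz for the canonical form. -/
lemma rootForm_sq_le (x y : M) :
    P.RootForm x y * P.RootForm x y ≤ P.RootForm x x * P.RootForm y y := by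
  have hsymm : ∀ u v : M, P.RootForm u v = P.RootForm v u := fun u v =>
    P.rootForm_symmetric.eq u v
  have h : ∀ t : ℝ, 0 ≤ P.RootForm y y * (t * t) + (2 * P.RootForm x y) * t
      + P.RootForm x x := by
    intro t
    have h0 := P.zero_le_rootForm (x + t • y)
    have hexp : P.RootForm (x + t • y) (x + t • y)
        = P.RootForm y y * (t * t) + (2 * P.RootForm x y) * t + P.RootForm x x := by
      simp only [map_add, map_smul, LinearMap.add_apply, LinearMap.smul_apply,
        smul_eq_mul]
      rw [hsymm y x]
      ring
    rwa [hexp] at h0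
  have hd := discrim_le_zero h
  rw [discrim] at hd
  nlinarith

/-- Coxeter weights are at most 4. -/
lemma coxeterWeight_le_four (a b : ι) : P.pairing a b * P.pairing b a ≤ 4 := by
  have h1 : 2 * P.RootForm (P.root a) (P.root b) = P.pairing a b * P.RootForm (P.root b) (P.root b) :=
    P.toInvariantForm.two_mul_apply_root_root a b
  have h2 : 2 * P.RootForm (P.root b) (P.root a) = P.pairing b a * P.RootForm (P.root a) (P.root a) :=
    P.toInvariantForm.two_mul_apply_root_root b a
  have hsymm : P.RootForm (P.root a) (P.root b) = P.RootForm (P.root b) (P.root a) :=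
    P.rootForm_symmetric.eq _ _
  have hcs := rootForm_sq_le P (P.root a) (P.root b)
  have haa : 0 < P.RootForm (P.root a) (P.root a) := P.rootForm_pos_of_ne_zero (Submodule.subset_span ⟨a, rfl⟩) (P.ne_zero a)
  have hbb : 0 < P.RootForm (P.root b) (P.root b) := P.rootForm_pos_of_ne_zero (Submodule.subset_span ⟨b, rfl⟩) (P.ne_zero b)
  have hmul : (2 * P.RootForm (P.root a) (P.root b)) * (2 * P.RootForm (P.root b) (P.root a))
      = (P.pairing a b * P.RootForm (P.root b) (P.root b))
        * (P.pairing b a * P.RootForm (P.root a) (P.root a)) := by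
    rw [h1, h2]
  have e1 : P.pairing a b * P.pairing b a
      * (P.RootForm (P.root a) (P.root a) * P.RootForm (P.root b) (P.root b))
      = 4 * (P.RootForm (P.root a) (P.root b) * P.RootForm (P.root a) (P.root b)) := by
    linear_combination (-1 : ℝ) * hmul - 4 * (P.RootForm (P.root a)) (P.root b) * hsymm
  have e2 : P.pairing a b * P.pairing b a
      * (P.RootForm (P.root a) (P.root a) * P.RootForm (P.root b) (P.root b))
      ≤ 4 * (P.RootForm (P.root a) (P.root a) * P.RootForm (P.root b) (P.root b)) := by
    rw [e1]; linarith
  exact le_of_mul_le_mul_right e2 (mul_pos haa hbb)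

lemma not_linearIndependent_of_coxeterWeight_four [Finite ι] (a b : ι)
    (h4 : P.pairing a b * P.pairing b a = 4) :
    ¬ LinearIndependent ℝ ![P.root a, P.root b] := by
  intro hli
  haveI : IsAddTorsionFree M := .of_isTorsionFree ℝ M
  haveI := P.infinite_of_linearIndependent_coxeterWeight_four hli h4
  exact not_finite ι

/-- If `⟨β, δ∨⟩ > 0` and `δ` is not a multiple of `β`, then `δ - β` is a root. -/
lemma sub_mem_of_pairing_pos (hcr : P.IsCrystallographic) (l m : ι)
    (hdep : ∀ a : ℝ, P.root l ≠ a • P.root m)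
    (hpos : 0 < P.pairing m l) :
    P.root l - P.root m ∈ range P.root := by
  have hpos' : 0 < P.pairing l m := by
    have e : P.pairing l m * P.RootForm (P.root m) (P.root m)
        = P.pairing m l * P.RootForm (P.root l) (P.root l) :=
      P.toInvariantForm.pairing_mul_eq_pairing_mul_swap m l
    have hm' := P.rootForm_pos_of_ne_zero (Submodule.subset_span ⟨m, rfl⟩) (P.ne_zero m)
    have hl' := P.rootForm_pos_of_ne_zero (Submodule.subset_span ⟨l, rfl⟩) (P.ne_zero l)
    have : 0 < P.pairing l m * P.RootForm (P.root m) (P.root m) := by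
      rw [e]; exact mul_pos hpos hl'
    exact (pos_iff_pos_of_mul_pos this).mpr hm'
  obtain ⟨zp, hzp⟩ : ∃ z : ℤ, (z : ℝ) = P.pairing m l := by
    obtain ⟨z, hz⟩ := hcr.exists_value m l; exact ⟨z, by simpa using hz⟩
  obtain ⟨zq, hzq⟩ : ∃ z : ℤ, (z : ℝ) = P.pairing l m := by
    obtain ⟨z, hz⟩ := hcr.exists_value l m; exact ⟨z, by simpa using hz⟩
  by_cases hp1 : P.pairing m l = 1
  · -- reflection of root m in root l : root m - root l is a root
    have : P.root m - P.root l ∈ range P.root := by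
      refine ⟨P.reflectionPerm l m, ?_⟩
      rw [P.root_reflectionPerm, P.reflection_apply_root, hp1, one_smul]
    have := neg_mem P this
    rwa [neg_sub] at this
  by_cases hq1 : P.pairing l m = 1
  · refine ⟨P.reflectionPerm m l, ?_⟩
    rw [P.root_reflectionPerm, P.reflection_apply_root, hq1, one_smul]
  -- otherwise both pairings are ≥ 2, so the Coxeter weight is 4
  exfalso
  have hzp1 : 1 ≤ zp := by
    have : (0:ℝ) < zp := hzp ▸ hpos
    exact_mod_cast this
  have hzq1 : 1 ≤ zq := by
    have : (0:ℝ) < zq := hzq ▸ hpos'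
    exact_mod_cast this
  have hzp2 : 2 ≤ zp := by
    rcases lt_or_eq_of_le hzp1 with h | h
    · omega
    · exfalso; apply hp1; rw [← hzp, ← h]; norm_num
  have hzq2 : 2 ≤ zq := by
    rcases lt_or_eq_of_le hzq1 with h | h
    · omega
    · exfalso; apply hq1; rw [← hzq, ← h]; norm_num
  have h4le : (4:ℝ) ≤ P.pairing l m * P.pairing m l := by
    rw [← hzp, ← hzq]
    have : (4:ℤ) ≤ zq * zp := by nlinarith
    exact_mod_cast this
  have hle4 := coxeterWeight_le_four P l m
  have h4 : P.pairing l m * P.pairing m l = 4 := le_antisymm hle4 h4le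
  have hnli := not_linearIndependent_of_coxeterWeight_four P l m h4
  rw [linearIndependent_fin2] at hnli
  push_neg at hnli
  simp only [Matrix.cons_val_one, Matrix.head_cons, Matrix.cons_val_zero] at hnli
  rcases hnli (P.ne_zero m) with ⟨a, ha⟩
  exact hdep a ha.symm

end fintype

end ZsAux

/-- `Z_s(α) = {β ∈ Φ : ⟨β, α∨⟩ = 0 and α + β ∉ Φ}` is closed: if `β, γ ∈ Z_s(α)` and
`β + γ` is a root, then `β + γ ∈ Z_s(α)`. Stated for a finite reduced crystallographic
root system with `α = root i`, `β = root j`, `γ = root k`. -/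
theorem Zs_isClosed {ι M N : Type*} [Finite ι]
    [AddCommGroup M] [Module ℝ M] [AddCommGroup N] [Module ℝ N]
    (P : RootPairing ι ℝ M N) [P.IsRootSystem]
    (hcr : P.IsCrystallographic) (hred : P.IsReduced) (i j k : ι)
    (hj : P.pairing j i = 0 ∧ P.root i + P.root j ∉ Set.range P.root)
    (hk : P.pairing k i = 0 ∧ P.root i + P.root k ∉ Set.range P.root)
    (hsum : P.root j + P.root k ∈ Set.range P.root) :
    P.toLinearMap (P.root j + P.root k) (P.coroot i) = 0 ∧
      P.root i + (P.root j + P.root k) ∉ Set.range P.root := by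
  cases nonempty_fintype ι
  obtain ⟨m, hm⟩ := hsum
  have hpair : ∀ a b : ι, P.toLinearMap (P.root a) (P.coroot b) = P.pairing a b :=
    fun a b => P.root_coroot_eq_pairing a b
  have hadd : ∀ (x y : M) (c : N),
      P.toLinearMap (x + y) c = P.toLinearMap x c + P.toLinearMap y c := by
    intro x y c
    rw [map_add, LinearMap.add_apply]
  have hsmul : ∀ (a : ℝ) (x : M) (c : N),
      P.toLinearMap (a • x) c = a * P.toLinearMap x c := by
    intro a x c
    rw [map_smul, LinearMap.smul_apply, smul_eq_mul]
  refine ⟨?_, ?_⟩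
  · rw [hadd, hpair, hpair, hj.1, hk.1, add_zero]
  intro hmem
  obtain ⟨l, hl⟩ := hmem
  -- pairing l i = 2
  have hli : P.pairing l i = 2 := by
    have h2 : P.toLinearMap (P.root l) (P.coroot i) = 2 := by
      rw [hl, hadd, hadd, hpair, hpair, hpair, hj.1, hk.1, P.pairing_same]
      ring
    rwa [hpair] at h2
  -- pairing j l ≤ 0
  have hjl : P.pairing j l ≤ 0 := by
    by_contra hpos
    push_neg at hpos
    have hdep : ∀ a : ℝ, P.root l ≠ a • P.root j := by
      intro a ha
      have h2 : P.pairing l i = a * P.pairing j i := by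
        rw [← hpair, ha, hsmul, hpair]
      rw [hli, hj.1, mul_zero] at h2
      norm_num at h2
    have hmem2 := ZsAux.sub_mem_of_pairing_pos P hcr l j hdep hpos
    apply hk.2
    have heq : P.root l - P.root j = P.root i + P.root k := by
      rw [hl]; abel
    rwa [heq] at hmem2
  -- pairing k l ≤ 0
  have hkl : P.pairing k l ≤ 0 := by
    by_contra hpos
    push_neg at hpos
    have hdep : ∀ a : ℝ, P.root l ≠ a • P.root k := by
      intro a ha
      have h2 : P.pairing l i = a * P.pairing k i := by
        rw [← hpair, ha, hsmul, hpair]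
      rw [hli, hk.1, mul_zero] at h2
      norm_num at h2
    have hmem2 := ZsAux.sub_mem_of_pairing_pos P hcr l k hdep hpos
    apply hj.2
    have heq : P.root l - P.root k = P.root i + P.root j := by
      rw [hl]; abel
    rwa [heq] at hmem2
  -- pairing i l + pairing j l + pairing k l = 2
  have hsum2 : P.pairing i l + (P.pairing j l + P.pairing k l) = 2 := by
    have h2 : P.toLinearMap (P.root l) (P.coroot l) = 2 := by
      rw [hpair, P.pairing_same]
    rwa [hl, hadd, hadd, hpair, hpair, hpair] at h2
  have hil : 2 ≤ P.pairing i l := by linarith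
  -- Coxeter weight of (i, l) is at least 4, hence exactly 4
  have hle4 := ZsAux.coxeterWeight_le_four P i l
  have h4 : P.pairing i l * P.pairing l i = 4 := by
    rw [hli]; rw [hli] at hle4; linarith
  have hnli := ZsAux.not_linearIndependent_of_coxeterWeight_four P i l h4
  rcases hred.eq_or_eq_neg i l hnli with h | h
  · -- root i = root l ⇒ root j + root k = 0, impossible since it is the root m
    have h0 : P.root j + P.root k = 0 := by
      have h0' := hl
      rw [← h] at h0'
      exact (left_eq_add.mp h0')
    rw [← hm] at h0
    exact P.ne_zero m h0
  · -- root i = - root l ⇒ root j + root k = -2 • root i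
    have h2 : P.root m = (-2 : ℝ) • P.root i := by
      have hneg : P.root l = - P.root i := by rw [h, neg_neg]
      rw [hm]
      have heq : P.root j + P.root k = - P.root i - P.root i := by
        rw [eq_sub_iff_add_eq, ← hneg, hl]
        abel
      rw [heq]
      module
    have hnli2 : ¬ LinearIndependent ℝ ![P.root m, P.root i] := by
      rw [linearIndependent_fin2]
      push_neg
      intro h'
      exact ⟨-2, by simp [h2.symm]⟩
    rcases hred.eq_or_eq_neg m i hnli2 with h' | h'
    · have h2' : P.root i = (-2 : ℝ) • P.root i := h'.symm.trans h2
      have h3 : ((1 : ℝ) - (-2)) • P.root i = 0 := by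
        rw [sub_smul, one_smul]
        exact sub_eq_zero_of_eq h2'
      rw [smul_eq_zero] at h3
      rcases h3 with h'' | h''
      · norm_num at h''
      · exact P.ne_zero i h''
    · have h2' : - P.root i = (-2 : ℝ) • P.root i := h'.symm.trans h2
      have h3 : ((-1 : ℝ) - (-2)) • P.root i = 0 := by
        rw [sub_smul, neg_one_smul]
        exact sub_eq_zero_of_eq h2'
      rw [smul_eq_zero] at h3
      rcases h3 with h'' | h''
      · norm_num at h''
      · exact P.ne_zero i h''
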